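/- Suppose all vote shares p_d are distinct, a is not an integer, and ⌈a⌉ ∈ {1,…,N−1}. Then for every w ≥ 0, the seat total S = ⌈a⌉ minimizes Φ_p(·; w) over {0,…,N} if and only if w ≥ 2·p_(⌈a⌉+1) − 1 and (2⌈a⌉ − 1 − 2a)·w ≤ 2·p_(⌈a⌉) − 1. -/

import Mathlib

open Finset

/-- Sum of the `S` largest entries of the vote-share profile `p`. -/
noncomputable def topSum {N : ℕ} (p : Fin N → ℝ) (S : ℕ) : ℝ :=
  ∑ i : Fin N, if (i : ℕ) < S then p (Tuple.sort p i.rev) else 0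

/-- `ordStat p i` is the `(i+1)`-th largest entry of `p` (so `ordStat p ⟨S-1,_⟩` is `p_(S)`). -/
noncomputable def ordStat {N : ℕ} (p : Fin N → ℝ) (i : Fin N) : ℝ :=
  p (Tuple.sort p i.rev)

/-- Total misrepresentation `Φ_p(S; w) = S + a − 2·Γ_p(S) + w·|a − S|` of a top-`S`
allocation at weight `w`, where `a = ∑ d, p d`. -/
noncomputable def PhiS {N : ℕ} (p : Fin N → ℝ) (S : ℕ) (w : ℝ) : ℝ :=
  (S : ℝ) + (∑ d, p d) - 2 * topSum p S + w * |(∑ d, p d) - (S : ℝ)|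

lemma ordStat_strictAnti {N : ℕ} (p : Fin N → ℝ) (hinj : Function.Injective p) :
    StrictAnti (ordStat p) := by
  have hmono : StrictMono (p ∘ Tuple.sort p) :=
    (Tuple.monotone_sort p).strictMono_of_injective
      (hinj.comp (Equiv.injective _))
  intro i j hij
  exact hmono (by simpa [Fin.rev_lt_rev] using hij)

lemma topSum_succ {N : ℕ} (p : Fin N → ℝ) (S : ℕ) (hS : S < N) :
    topSum p (S + 1) = topSum p S + ordStat p ⟨S, hS⟩ := by
  unfold topSum ordStat
  have key : ∀ i : Fin N, (if (i : ℕ) < S + 1 then p (Tuple.sort p i.rev) else 0)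
      = (if (i : ℕ) < S then p (Tuple.sort p i.rev) else 0)
        + (if i = ⟨S, hS⟩ then p (Tuple.sort p i.rev) else 0) := by
    intro i
    by_cases h1 : (i : ℕ) < S
    · have : i ≠ ⟨S, hS⟩ := by
        intro h; rw [h] at h1; exact absurd h1 (lt_irrefl S)
      simp [h1, this, Nat.lt_succ_of_lt]
      exact fun h => absurd h1 (by omega)
    · by_cases h2 : i = ⟨S, hS⟩
      · subst h2; simp [h1]
      · have : ¬ (i : ℕ) < S + 1 := by
          intro h
          exact h2 (Fin.ext (by simp only [Fin.val_mk]; omega))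
        simp [h1, h2, this]
  rw [Finset.sum_congr rfl (fun i _ => key i), Finset.sum_add_distrib,
    Finset.sum_ite_eq' Finset.univ (⟨S, hS⟩ : Fin N)]
  simp

lemma phi_diff {N : ℕ} (p : Fin N → ℝ) (w : ℝ) (S : ℕ) (hS : S < N) :
    PhiS p (S + 1) w = PhiS p S w +
      (1 - 2 * ordStat p ⟨S, hS⟩ +
        w * (|(∑ d, p d) - ((S : ℝ) + 1)| - |(∑ d, p d) - (S : ℝ)|)) := by
  unfold PhiS
  rw [topSum_succ p S hS]
  push_cast
  ring


/-- near-proportionality weight set for `S = ⌈a⌉`.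
Suppose all vote shares are distinct, `a` is not an integer, and `⌈a⌉ ∈ {1,…,N−1}`.
Then for every `w ≥ 0`, the seat total `S = ⌈a⌉` minimizes `Φ_p(·; w)` over `{0,…,N}`
if and only if `w ≥ 2·p_(⌈a⌉+1) − 1` and `(2⌈a⌉ − 1 − 2a)·w ≤ 2·p_(⌈a⌉) − 1`. -/
theorem stmt6 (N : ℕ) (hN : 3 ≤ N) (p : Fin N → ℝ)
    (hp : ∀ d, 0 ≤ p d ∧ p d ≤ 1) (hinj : Function.Injective p)
    (a : ℝ) (ha : a = ∑ d, p d) (hnotint : ∀ z : ℤ, a ≠ (z : ℝ))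
    (hcl1 : 1 ≤ ⌈a⌉₊) (hcl2 : ⌈a⌉₊ ≤ N - 1)
    (w : ℝ) (hw : 0 ≤ w) :
    (∀ S' ≤ N, PhiS p ⌈a⌉₊ w ≤ PhiS p S' w) ↔
      (2 * ordStat p ⟨⌈a⌉₊, by omega⟩ - 1 ≤ w ∧
       (2 * (⌈a⌉₊ : ℝ) - 1 - 2 * a) * w ≤ 2 * ordStat p ⟨⌈a⌉₊ - 1, by omega⟩ - 1) := by
  have ha0 : 0 ≤ a := by
    rw [ha]; exact Finset.sum_nonneg fun d _ => (hp d).1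
  have ham : a < (⌈a⌉₊ : ℝ) := by
    refine lt_of_le_of_ne (Nat.le_ceil a) ?_
    intro hcontra
    exact hnotint (⌈a⌉₊ : ℤ) (by push_cast; exact hcontra)
  have ham1 : (⌈a⌉₊ : ℝ) - 1 < a := by
    have := Nat.ceil_lt_add_one ha0
    linarith
  set m := ⌈a⌉₊ with hm
  have mN : m < N := by omega
  have hm1N : m - 1 < N := by omega
  have hmcast : ((m - 1 : ℕ) : ℝ) = (m : ℝ) - 1 := by
    rw [Nat.cast_sub hcl1]; simp
  have hanti := ordStat_strictAnti p hinj
  have key : ∀ S (hS : S < N), PhiS p (S+1) w = PhiS p S w +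
      (1 - 2 * ordStat p ⟨S, hS⟩ + w * (|a - ((S:ℝ)+1)| - |a - (S:ℝ)|)) := by
    intro S hS
    have h := phi_diff p w S hS
    rw [← ha] at h
    exact_mod_cast h
  constructor
  · intro h
    constructor
    · have h1 := h (m+1) (by omega)
      have hd := key m mN
      have e1 : |a - ((m:ℝ)+1)| = (m:ℝ)+1 - a := by
        rw [abs_of_nonpos (by linarith)]; ring
      have e2 : |a - (m:ℝ)| = (m:ℝ) - a := by
        rw [abs_of_nonpos (by linarith)]; ring
      rw [e1, e2] at hd
      linarith [h1, hd]
    · have h2 := h (m-1) (by omega)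
      have hd := key (m-1) hm1N
      rw [hmcast] at hd
      have hsucc : m - 1 + 1 = m := by omega
      rw [hsucc] at hd
      have e1 : |a - ((m:ℝ)-1+1)| = (m:ℝ) - a := by
        rw [abs_of_nonpos (by linarith)]; ring
      have e2 : |a - ((m:ℝ)-1)| = a - ((m:ℝ)-1) := by
        rw [abs_of_nonneg (by linarith)]
      rw [e1, e2] at hd
      linarith [h2, hd]
  · rintro ⟨c1, c2⟩ S hSN
    have hq2 : -w ≤ 2 * ordStat p ⟨m-1, hm1N⟩ - 1 := by
      have hprod : 0 ≤ (2*(m:ℝ) - 2*a) * w :=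
        mul_nonneg (by linarith) hw
      nlinarith [c2]
    have stepup : ∀ T, m ≤ T → T < N → PhiS p T w ≤ PhiS p (T+1) w := by
      intro T hmT hTN
      have hd := key T hTN
      have haT : a ≤ (T:ℝ) := le_trans ham.le (by exact_mod_cast hmT)
      have e1 : |a - ((T:ℝ)+1)| = (T:ℝ)+1 - a := by
        rw [abs_of_nonpos (by linarith)]; ring
      have e2 : |a - (T:ℝ)| = (T:ℝ) - a := by
        rw [abs_of_nonpos (by linarith)]; ring
      rw [e1, e2] at hd
      have hq : ordStat p ⟨T, hTN⟩ ≤ ordStat p ⟨m, mN⟩ :=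
        hanti.antitone (by simp [Fin.mk_le_mk]; omega)
      linarith [hd, c1, hq]
    have up : ∀ T, m ≤ T → T ≤ N → PhiS p m w ≤ PhiS p T w := by
      intro T hmT
      induction T, hmT using Nat.le_induction with
      | base => intro _; exact le_refl _
      | succ T hmT ih =>
        intro hTN
        exact le_trans (ih (by omega)) (stepup T hmT (by omega))
    have stepdown : ∀ T, T < m → PhiS p (T+1) w ≤ PhiS p T w := by
      intro T hTm
      have hTN : T < N := by omega
      have hd := key T hTN
      have hTcast : (T:ℝ) ≤ (m:ℝ) - 1 := by
        rw [← hmcast]; exact_mod_cast Nat.le_sub_one_of_lt hTm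
      have e2 : |a - (T:ℝ)| = a - (T:ℝ) := abs_of_nonneg (by linarith)
      rcases eq_or_lt_of_le (Nat.succ_le_of_lt hTm) with heq | hlt
      · -- T + 1 = m
        have hTr : (T:ℝ) = (m:ℝ) - 1 := by
          have : ((T+1 : ℕ) : ℝ) = (m:ℝ) := by exact_mod_cast congrArg (Nat.cast (R := ℝ)) heq
          push_cast at this; linarith
        have e1 : |a - ((T:ℝ)+1)| = (T:ℝ)+1 - a := by
          rw [abs_of_nonpos (by rw [hTr]; linarith)]; ring
        rw [e1, e2] at hd
        have hfin : (⟨T, hTN⟩ : Fin N) = ⟨m - 1, hm1N⟩ := by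
          apply Fin.ext; simp; omega
        rw [hfin] at hd
        rw [hTr] at hd
        linarith [hd, c2]
      · -- T + 1 < m
        have e1 : |a - ((T:ℝ)+1)| = a - ((T:ℝ)+1) := by
          apply abs_of_nonneg
          have : ((T+1:ℕ):ℝ) ≤ (m:ℝ) - 1 := by
            rw [← hmcast]; exact_mod_cast Nat.le_sub_one_of_lt hlt
          push_cast at this; linarith
        rw [e1, e2] at hd
        have hq : ordStat p ⟨m-1, hm1N⟩ ≤ ordStat p ⟨T, hTN⟩ :=
          hanti.antitone (by simp [Fin.mk_le_mk]; omega)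
        linarith [hd, hq, hq2]
    have down : ∀ k, PhiS p m w ≤ PhiS p (m - k) w := by
      intro k
      induction k with
      | zero => simp
      | succ k ih =>
        by_cases hk : m ≤ k
        · have heq : m - (k+1) = m - k := by omega
          rw [heq]; exact ih
        · have h1 : m - (k+1) < m := by omega
          have h2 : m - (k+1) + 1 = m - k := by omega
          refine le_trans ih ?_
          have hs := stepdown (m - (k+1)) h1
          rw [h2] at hs
          exact hs
    rcases le_or_gt m S with hms | hsm
    · exact up S hms hSN
    · have heq : S = m - (m - S) := by omega
      rw [heq]; exact down (m - S)
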